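/- arXiv:1707.01422 — 3 statements merged into one kernel-verified Lean document; each statement's English description precedes it below -/
import Mathlib

section
/- For every (t,x,y)∈ℝ×ℝ^{p_0}×ℝ^{p_1}, every v∈ℝ^{p_0} and every δ∈ℝ, the composite curve satisfies γ_{v,δ}(t,x,y) = (t, x, y + δ³ B_{1,0} v) − δ⁵ (0, Σ_{n=0}^∞ ((−1)^n δ^{2n}/(n+2)!) B^{n+2}(v,0)ᵀ), where the series converges absolutely. -/
noncomputable section

open Matrix

/-- Matrix exponential. -/
def mexp {n : Type*} [Fintype n] [DecidableEq n] (M : Matrix n n ℝ) : Matrix n n ℝ :=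
  NormedSpace.exp M

variable {p₀ p₁ : ℕ}

/-- `γ⁰_{v,δ}(t,x,y) := (t, x + δ v, y)`. -/
def gamma0 (v : Fin p₀ → ℝ) (δ : ℝ) (z : ℝ × (Fin p₀ → ℝ) × (Fin p₁ → ℝ)) :
    ℝ × (Fin p₀ → ℝ) × (Fin p₁ → ℝ) :=
  (z.1, z.2.1 + δ • v, z.2.2)

/-- `e^{δY}(t,x,y) := (t + δ, e^{δB}(x,y)ᵀ)`. -/
def expY (B : Matrix (Fin p₀ ⊕ Fin p₁) (Fin p₀ ⊕ Fin p₁) ℝ) (δ : ℝ)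
    (z : ℝ × (Fin p₀ → ℝ) × (Fin p₁ → ℝ)) : ℝ × (Fin p₀ → ℝ) × (Fin p₁ → ℝ) :=
  (z.1 + δ,
    fun i => (mexp (δ • B)).mulVec (Sum.elim z.2.1 z.2.2) (Sum.inl i),
    fun i => (mexp (δ • B)).mulVec (Sum.elim z.2.1 z.2.2) (Sum.inr i))

/-- `γ_{v,δ} := γ⁰_{B₀₀v,−δ³} ∘ e^{−δ²Y} ∘ γ⁰_{v,−δ} ∘ e^{δ²Y} ∘ γ⁰_{v,δ}`. -/
def gammaC (B : Matrix (Fin p₀ ⊕ Fin p₁) (Fin p₀ ⊕ Fin p₁) ℝ) (v : Fin p₀ → ℝ) (δ : ℝ) :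
    ℝ × (Fin p₀ → ℝ) × (Fin p₁ → ℝ) → ℝ × (Fin p₀ → ℝ) × (Fin p₁ → ℝ) :=
  gamma0 ((toBlocks₁₁ B).mulVec v) (-δ ^ 3) ∘ expY B (-δ ^ 2) ∘ gamma0 v (-δ) ∘
    expY B (δ ^ 2) ∘ gamma0 v δ

/-- `g_{v,δ} := γ⁰_{v′,δ⁵} ∘ γ_{v,δ}` where
`v′ := Σ_{n} ((−1)^n δ^{2n}/(n+2)!) (B^{n+2})₀₀ v`. -/
def gC (B : Matrix (Fin p₀ ⊕ Fin p₁) (Fin p₀ ⊕ Fin p₁) ℝ) (v : Fin p₀ → ℝ) (δ : ℝ) :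
    ℝ × (Fin p₀ → ℝ) × (Fin p₁ → ℝ) → ℝ × (Fin p₀ → ℝ) × (Fin p₁ → ℝ) :=
  gamma0 (∑' n : ℕ, ((-1 : ℝ) ^ n * δ ^ (2 * n) / (n + 2).factorial) •
      (toBlocks₁₁ (B ^ (n + 2))).mulVec v) (δ ^ 5) ∘ gammaC B v δ

/-- Euclidean norm on `ℝ^p`. -/
def enorm {p : ℕ} (x : Fin p → ℝ) : ℝ := Real.sqrt (∑ i, x i ^ 2)

/-! ### Auxiliary lemmas -/

lemma aux_mexp_mulVec_eq (B : Matrix (Fin p₀ ⊕ Fin p₁) (Fin p₀ ⊕ Fin p₁) ℝ)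
    (u : Fin p₀ ⊕ Fin p₁ → ℝ) (c : ℝ) :
    Summable (fun k : ℕ => (c ^ k / k.factorial) • (B ^ k).mulVec u) ∧
    (mexp (c • B)).mulVec u = ∑' k : ℕ, (c ^ k / k.factorial) • (B ^ k).mulVec u := by
  letI : SeminormedRing (Matrix (Fin p₀ ⊕ Fin p₁) (Fin p₀ ⊕ Fin p₁) ℝ) :=
    Matrix.linftyOpSemiNormedRing
  letI : NormedRing (Matrix (Fin p₀ ⊕ Fin p₁) (Fin p₀ ⊕ Fin p₁) ℝ) := Matrix.linftyOpNormedRing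
  letI : NormedAlgebra ℝ (Matrix (Fin p₀ ⊕ Fin p₁) (Fin p₀ ⊕ Fin p₁) ℝ) :=
    Matrix.linftyOpNormedAlgebra
  set L : Matrix (Fin p₀ ⊕ Fin p₁) (Fin p₀ ⊕ Fin p₁) ℝ →L[ℝ] ((Fin p₀ ⊕ Fin p₁) → ℝ) :=
    LinearMap.mkContinuous
      { toFun := fun A => A.mulVec u
        map_add' := fun A C => Matrix.add_mulVec A C u
        map_smul' := fun r A => Matrix.smul_mulVec r A u }
      ‖u‖ (fun A => by rw [mul_comm]; exact Matrix.linfty_opNorm_mulVec A u) with hLdef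
  have hs : Summable fun k : ℕ => ((k.factorial : ℝ)⁻¹) • (c • B) ^ k :=
    NormedSpace.expSeries_summable' (𝕂 := ℝ) (c • B)
  have key : ∀ k : ℕ, L (((k.factorial : ℝ)⁻¹) • (c • B) ^ k)
      = (c ^ k / k.factorial) • (B ^ k).mulVec u := by
    intro k
    simp only [hLdef, LinearMap.mkContinuous_apply, LinearMap.coe_mk, AddHom.coe_mk,
      smul_pow, Matrix.smul_mulVec, smul_smul, div_eq_mul_inv]
    rw [mul_comm]
    exact Matrix.smul_mulVec (c ^ k * ((k.factorial : ℝ))⁻¹) (B ^ k) u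
  constructor
  · have h2 := hs.map L.toLinearMap.toAddMonoidHom L.continuous
    exact h2.congr key
  · have hexp : (mexp (c • B)) = ∑' k : ℕ, ((k.factorial : ℝ)⁻¹) • (c • B) ^ k := by
      rw [mexp]; exact congrFun (NormedSpace.exp_eq_tsum (𝕂 := ℝ)) _
    have hLe : (mexp (c • B)).mulVec u = L (∑' k : ℕ, ((k.factorial : ℝ)⁻¹) • (c • B) ^ k) := by
      rw [hexp]; rfl
    rw [hLe, L.map_tsum hs]
    exact tsum_congr key

lemma aux_summable_norm (B : Matrix (Fin p₀ ⊕ Fin p₁) (Fin p₀ ⊕ Fin p₁) ℝ)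
    (u : Fin p₀ ⊕ Fin p₁ → ℝ) (δ : ℝ) :
    Summable fun n : ℕ => ‖((-1 : ℝ) ^ n * δ ^ (2 * n) / (n + 2).factorial) •
        (B ^ (n + 2)).mulVec u‖ := by
  letI : SeminormedRing (Matrix (Fin p₀ ⊕ Fin p₁) (Fin p₀ ⊕ Fin p₁) ℝ) :=
    Matrix.linftyOpSemiNormedRing
  letI : NormedRing (Matrix (Fin p₀ ⊕ Fin p₁) (Fin p₀ ⊕ Fin p₁) ℝ) := Matrix.linftyOpNormedRing
  have hg : Summable fun n : ℕ => (‖B‖ ^ 2 * ‖u‖) * ((δ ^ 2 * ‖B‖) ^ n / n.factorial) :=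
    (Real.summable_pow_div_factorial (δ ^ 2 * ‖B‖)).mul_left _
  refine Summable.of_nonneg_of_le (fun n => norm_nonneg _) (fun n => ?_) hg
  have habs : |(-1 : ℝ) ^ n * δ ^ (2 * n) / ((n + 2).factorial : ℝ)|
      = (δ ^ 2) ^ n / ((n + 2).factorial : ℝ) := by
    rw [abs_div, abs_mul, abs_pow, abs_pow, abs_neg, abs_one, one_pow, one_mul,
      Nat.abs_cast, pow_mul, sq_abs]
  have h1 : ‖(B ^ (n + 2)).mulVec u‖ ≤ ‖B‖ ^ (n + 2) * ‖u‖ := by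
    refine le_trans (Matrix.linfty_opNorm_mulVec _ _) ?_
    exact mul_le_mul_of_nonneg_right (norm_pow_le' B (Nat.succ_pos _)) (norm_nonneg u)
  have h2 : ((δ ^ 2) ^ n / ((n + 2).factorial : ℝ)) ≤ (δ ^ 2) ^ n / (n.factorial : ℝ) := by
    gcongr
    omega
  calc ‖((-1 : ℝ) ^ n * δ ^ (2 * n) / ((n + 2).factorial : ℝ)) • (B ^ (n + 2)).mulVec u‖
      = ((δ ^ 2) ^ n / ((n + 2).factorial : ℝ)) * ‖(B ^ (n + 2)).mulVec u‖ := by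
        rw [norm_smul, Real.norm_eq_abs, habs]
    _ ≤ ((δ ^ 2) ^ n / (n.factorial : ℝ)) * (‖B‖ ^ (n + 2) * ‖u‖) := by
        exact mul_le_mul h2 h1 (norm_nonneg _) (by positivity)
    _ = (‖B‖ ^ 2 * ‖u‖) * ((δ ^ 2 * ‖B‖) ^ n / n.factorial) := by
        rw [mul_pow]; ring

lemma aux_mulVec_elim_inl (A : Matrix (Fin p₀ ⊕ Fin p₁) (Fin p₀ ⊕ Fin p₁) ℝ)
    (v : Fin p₀ → ℝ) (i : Fin p₀) :
    A.mulVec (Sum.elim v 0) (Sum.inl i) = (toBlocks₁₁ A).mulVec v i := by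
  simp [Matrix.mulVec, dotProduct, Fintype.sum_sum_type, Matrix.toBlocks₁₁]

lemma aux_mulVec_elim_inr (A : Matrix (Fin p₀ ⊕ Fin p₁) (Fin p₀ ⊕ Fin p₁) ℝ)
    (v : Fin p₀ → ℝ) (i : Fin p₁) :
    A.mulVec (Sum.elim v 0) (Sum.inr i) = (toBlocks₂₁ A).mulVec v i := by
  simp [Matrix.mulVec, dotProduct, Fintype.sum_sum_type, Matrix.toBlocks₂₁]

/-- explicit form of the composite curve `γ_{v,δ}`, with absolutely
convergent series. -/
theorem stmt_1 {p₀ p₁ : ℕ} (hp₀ : 1 ≤ p₀) (hp₁ : 1 ≤ p₁)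
    (B : Matrix (Fin p₀ ⊕ Fin p₁) (Fin p₀ ⊕ Fin p₁) ℝ)
    (t : ℝ) (x : Fin p₀ → ℝ) (y : Fin p₁ → ℝ) (v : Fin p₀ → ℝ) (δ : ℝ) :
    (Summable fun n : ℕ => ‖((-1 : ℝ) ^ n * δ ^ (2 * n) / (n + 2).factorial) •
        (B ^ (n + 2)).mulVec (Sum.elim v 0)‖) ∧
      gammaC B v δ (t, x, y) =
        (t,
         x - δ ^ 5 • fun i => (∑' n : ℕ, ((-1 : ℝ) ^ n * δ ^ (2 * n) / (n + 2).factorial) •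
            (B ^ (n + 2)).mulVec (Sum.elim v 0)) (Sum.inl i),
         (y + δ ^ 3 • (toBlocks₂₁ B).mulVec v) -
           δ ^ 5 • fun i => (∑' n : ℕ, ((-1 : ℝ) ^ n * δ ^ (2 * n) / (n + 2).factorial) •
            (B ^ (n + 2)).mulVec (Sum.elim v 0)) (Sum.inr i)) := by
  set u : Fin p₀ ⊕ Fin p₁ → ℝ := Sum.elim v 0 with hu
  refine ⟨aux_summable_norm B u δ, ?_⟩
  set S : Fin p₀ ⊕ Fin p₁ → ℝ :=
    ∑' n : ℕ, ((-1 : ℝ) ^ n * δ ^ (2 * n) / (n + 2).factorial) • (B ^ (n + 2)).mulVec u with hS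
  obtain ⟨hfs, hFu⟩ := aux_mexp_mulVec_eq B u (-δ ^ 2)
  set w : Fin p₀ ⊕ Fin p₁ → ℝ := Sum.elim (x + δ • v) y with hw
  have hFE : mexp ((-δ ^ 2) • B) * mexp ((δ ^ 2) • B) = 1 := by
    rw [mexp, mexp,
      ← Matrix.exp_add_of_commute _ _ (((Commute.refl B).smul_left _).smul_right _),
      ← add_smul, neg_add_cancel, zero_smul]
    exact NormedSpace.exp_zero
  have hcancel : (mexp ((-δ ^ 2) • B)).mulVec ((mexp ((δ ^ 2) • B)).mulVec w) = w := by
    rw [Matrix.mulVec_mulVec, hFE, Matrix.one_mulVec]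
  -- split off the first two terms of the exponential series
  have hsplit : (mexp ((-δ ^ 2) • B)).mulVec u
      = u + (-δ ^ 2) • B.mulVec u
        + ∑' n : ℕ, ((-δ ^ 2) ^ (n + 2) / ((n + 2).factorial : ℝ)) • (B ^ (n + 2)).mulVec u := by
    rw [hFu, Summable.tsum_eq_zero_add hfs, Summable.tsum_eq_zero_add ((summable_nat_add_iff 1).mpr hfs)]
    simp only [pow_zero, Nat.factorial_zero, Nat.cast_one, div_one, one_smul,
      Matrix.one_mulVec, zero_add, pow_one, Nat.factorial_one, Nat.cast_one]
    rw [← add_assoc]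
  have hT : Summable fun n : ℕ =>
      ((-δ ^ 2) ^ (n + 2) / ((n + 2).factorial : ℝ)) • (B ^ (n + 2)).mulVec u := by
    have := (summable_nat_add_iff 2).mpr hfs
    exact this
  have hS' : Summable fun n : ℕ =>
      ((-1 : ℝ) ^ n * δ ^ (2 * n) / ((n + 2).factorial : ℝ)) • (B ^ (n + 2)).mulVec u :=
    (aux_summable_norm B u δ).of_norm
  have hscal : ∀ n : ℕ, δ * ((-δ ^ 2) ^ (n + 2) / ((n + 2).factorial : ℝ))
      = δ ^ 5 * ((-1 : ℝ) ^ n * δ ^ (2 * n) / ((n + 2).factorial : ℝ)) := by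
    intro n
    have h1 : ((-δ ^ 2) : ℝ) ^ (n + 2) = (-1 : ℝ) ^ n * δ ^ (2 * n) * δ ^ 4 := by
      rw [neg_pow, pow_add, neg_one_pow_eq_pow_mod_two]
      simp [Nat.add_mod, pow_mul]
      ring
    rw [h1]; ring
  have htail : δ • (∑' n : ℕ, ((-δ ^ 2) ^ (n + 2) / ((n + 2).factorial : ℝ)) •
      (B ^ (n + 2)).mulVec u) = δ ^ 5 • S := by
    rw [hS, ← Summable.tsum_const_smul δ hT, ← Summable.tsum_const_smul (δ ^ 5) hS']
    refine tsum_congr fun n => ?_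
    rw [smul_smul, smul_smul, hscal n]
  have hexpand : δ • ((mexp ((-δ ^ 2) • B)).mulVec u)
      = δ • u - δ ^ 3 • B.mulVec u + δ ^ 5 • S := by
    rw [hsplit, smul_add, smul_add, htail, smul_smul]
    module
  have hkey : (mexp ((-δ ^ 2) • B)).mulVec ((mexp ((δ ^ 2) • B)).mulVec w - δ • u)
      = w - δ • u + δ ^ 3 • B.mulVec u - δ ^ 5 • S := by
    rw [Matrix.mulVec_sub, hcancel, Matrix.mulVec_smul, hexpand]
    abel
  -- unfold the composite
  simp only [gammaC, Function.comp_apply, gamma0, expY]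
  have hu4 : (Sum.elim
      ((fun i => (mexp ((δ ^ 2) • B)).mulVec w (Sum.inl i)) + (-δ) • v)
      (fun i => (mexp ((δ ^ 2) • B)).mulVec w (Sum.inr i)))
      = (mexp ((δ ^ 2) • B)).mulVec w - δ • u := by
    funext j
    cases j with
    | inl j => simp [hu, sub_eq_add_neg]
    | inr j => simp [hu]
  rw [show (Sum.elim (x + δ • v) y : Fin p₀ ⊕ Fin p₁ → ℝ) = w from rfl]
  rw [hu4]
  simp only [Prod.mk.injEq]
  refine ⟨by ring, ?_, ?_⟩
  · funext i
    rw [Pi.add_apply]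
    rw [show (mexp ((-δ ^ 2) • B)).mulVec ((mexp ((δ ^ 2) • B)).mulVec w - δ • u) (Sum.inl i)
      = (w - δ • u + δ ^ 3 • B.mulVec u - δ ^ 5 • S) (Sum.inl i) from congrFun hkey _]
    simp only [Pi.sub_apply, Pi.add_apply, Pi.smul_apply, smul_eq_mul, hw, hu,
      Sum.elim_inl, aux_mulVec_elim_inl, Pi.zero_apply]
    ring
  · funext i
    rw [show (mexp ((-δ ^ 2) • B)).mulVec ((mexp ((δ ^ 2) • B)).mulVec w - δ • u) (Sum.inr i)
      = (w - δ • u + δ ^ 3 • B.mulVec u - δ ^ 5 • S) (Sum.inr i) from congrFun hkey _]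
    simp only [Pi.sub_apply, Pi.add_apply, Pi.smul_apply, smul_eq_mul, hw, hu,
      Sum.elim_inr, aux_mulVec_elim_inr, Pi.zero_apply]
    ring
end
end

section
/- For every (t,x,y)∈ℝ×ℝ^{p_0}×ℝ^{p_1}, every v∈ℝ^{p_0} and every δ∈ℝ, it holds g_{v,δ}(t,x,y) − (t,x,y) = (0, 0, δ³ R(δ,v)), where R(δ,v) := Σ_{n=0}^∞ ((−1)^n δ^{2n}/(n+1)!) (B^{n+1})_{1,0} v and the series converges absolutely. In particular the time component and the x-component of (t,x,y) are left unchanged by g_{v,δ}. -/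
noncomputable section

open Matrix

variable {p₀ p₁ : ℕ}

section AuxGen

set_option linter.unusedSectionVars false

variable {d κ : Type*} [Fintype d] [DecidableEq d] [Fintype κ]

/-- mulVec by `u` then coordinate projection along `φ`, as a continuous linear map
in the matrix argument. -/
def mulVecProjCLM (u : d → ℝ) (φ : κ → d) : Matrix d d ℝ →L[ℝ] (κ → ℝ) :=
  { toLinearMap :=
    { toFun := fun M => fun i => M.mulVec u (φ i)
      map_add' := fun M N => by funext i; simp [Matrix.add_mulVec]
      map_smul' := fun c M => by funext i; simp [Matrix.smul_mulVec] }
    cont := by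
      refine continuous_pi fun i => ?_
      simp only [Matrix.mulVec, dotProduct]
      exact continuous_finset_sum _ fun j _ =>
        by fun_prop }

lemma summable_expSeries (M : Matrix d d ℝ) :
    Summable fun k : ℕ => ((k.factorial : ℝ)⁻¹) • M ^ k := by
  letI : SeminormedRing (Matrix d d ℝ) := Matrix.linftyOpSemiNormedRing
  letI : NormedRing (Matrix d d ℝ) := Matrix.linftyOpNormedRing
  letI : NormedAlgebra ℝ (Matrix d d ℝ) := Matrix.linftyOpNormedAlgebra
  exact NormedSpace.expSeries_summable' (𝕂 := ℝ) M

lemma mulVecProjCLM_term (u : d → ℝ) (φ : κ → d) (c : ℝ) (B : Matrix d d ℝ) (k : ℕ) :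
    mulVecProjCLM u φ (((k.factorial : ℝ)⁻¹) • (c • B) ^ k)
      = (((k.factorial : ℝ)⁻¹) * c ^ k) • fun i => (B ^ k).mulVec u (φ i) := by
  rw [smul_pow, _root_.map_smul, _root_.map_smul, smul_smul]
  rfl

lemma mexp_mulVec_proj (c : ℝ) (B : Matrix d d ℝ) (u : d → ℝ) (φ : κ → d) :
    (fun i => (mexp (c • B)).mulVec u (φ i))
      = ∑' k : ℕ, (((k.factorial : ℝ)⁻¹) * c ^ k) • fun i => (B ^ k).mulVec u (φ i) := by
  have h1 : mexp (c • B) = ∑' k : ℕ, ((k.factorial : ℝ)⁻¹) • (c • B) ^ k := by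
    rw [mexp]
    exact congrFun (NormedSpace.exp_eq_tsum ℝ) (c • B)
  have h2 : (fun i => (mexp (c • B)).mulVec u (φ i)) = mulVecProjCLM u φ (mexp (c • B)) := rfl
  rw [h2, h1, (mulVecProjCLM u φ).map_tsum (summable_expSeries _)]
  exact tsum_congr fun k => mulVecProjCLM_term u φ c B k

lemma summable_mulVec_proj (c : ℝ) (B : Matrix d d ℝ) (u : d → ℝ) (φ : κ → d) :
    Summable fun k : ℕ => (((k.factorial : ℝ)⁻¹) * c ^ k) • fun i => (B ^ k).mulVec u (φ i) := by
  have h := ((summable_expSeries (c • B)).map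
    (mulVecProjCLM u φ : Matrix d d ℝ →L[ℝ] (κ → ℝ)).toLinearMap.toAddMonoidHom
    (mulVecProjCLM u φ).continuous)
  exact h.congr fun k => mulVecProjCLM_term u φ c B k

lemma mexp_neg_mulVec_cancel (c : ℝ) (B : Matrix d d ℝ) (w : d → ℝ) :
    (mexp (-c • B)).mulVec ((mexp (c • B)).mulVec w) = w := by
  rw [Matrix.mulVec_mulVec]
  have h : mexp (-c • B) * mexp (c • B) = 1 := by
    rw [mexp, mexp, ← Matrix.exp_add_of_commute (-c • B) (c • B)]
    · rw [neg_smul, neg_add_cancel, NormedSpace.exp_zero]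
    · rw [neg_smul]
      exact (Commute.refl (c • B)).neg_left
  rw [h, Matrix.one_mulVec]

lemma norm_pow_mulVec_le (B : Matrix d d ℝ) (u : d → ℝ) (m : ℕ) (hm : 0 < m) :
    ∃ C r : ℝ, 0 ≤ C ∧ 0 ≤ r ∧ ∀ n : ℕ, ‖(B ^ (n + m)).mulVec u‖ ≤ C * r ^ n := by
  letI : SeminormedRing (Matrix d d ℝ) := Matrix.linftyOpSemiNormedRing
  refine ⟨‖B‖ ^ m * ‖u‖, ‖B‖, by positivity, norm_nonneg _, fun n => ?_⟩
  calc ‖(B ^ (n + m)).mulVec u‖ ≤ ‖B ^ (n + m)‖ * ‖u‖ := Matrix.linfty_opNorm_mulVec _ _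
    _ ≤ ‖B‖ ^ (n + m) * ‖u‖ := by
        gcongr
        exact norm_pow_le' B (by omega)
    _ = ‖B‖ ^ m * ‖u‖ * ‖B‖ ^ n := by rw [pow_add]; ring

lemma summable_norm_smul_of_bound {F : Type*} [NormedAddCommGroup F] [NormedSpace ℝ F] (δ C r : ℝ)
    (hC : 0 ≤ C) (hr : 0 ≤ r) (m : ℕ) (g : ℕ → F) (hg : ∀ n, ‖g n‖ ≤ C * r ^ n) :
    Summable fun n : ℕ => ‖((-1 : ℝ) ^ n * δ ^ (2 * n) / (n + m).factorial) • g n‖ := by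
  have hsum : Summable fun n : ℕ => C * (δ ^ 2 * r) ^ n / n.factorial := by
    simpa [mul_div_assoc] using (Real.summable_pow_div_factorial (δ ^ 2 * r)).mul_left C
  refine Summable.of_nonneg_of_le (fun n => norm_nonneg _) (fun n => ?_) hsum
  rw [norm_smul, Real.norm_eq_abs]
  have habs : |(-1 : ℝ) ^ n * δ ^ (2 * n) / (n + m).factorial| ≤ (δ ^ 2) ^ n / n.factorial := by
    rw [abs_div, abs_mul, abs_pow, abs_pow, abs_neg, abs_one, one_pow, one_mul,
      abs_of_nonneg (by positivity : (0 : ℝ) ≤ ((n + m).factorial : ℕ))]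
    have h1 : |δ| ^ (2 * n) = (δ ^ 2) ^ n := by
      rw [pow_mul, sq_abs]
    rw [h1]
    gcongr <;>
      first
        | positivity
        | exact_mod_cast Nat.one_le_iff_ne_zero.2 n.factorial_ne_zero
        | omega
        | exact_mod_cast Nat.factorial_le (Nat.le_add_right n m)
  calc |(-1 : ℝ) ^ n * δ ^ (2 * n) / (n + m).factorial| * ‖g n‖
      ≤ ((δ ^ 2) ^ n / n.factorial) * (C * r ^ n) := by
        apply mul_le_mul habs (hg n) (norm_nonneg _) (by positivity)
    _ = C * (δ ^ 2 * r) ^ n / n.factorial := by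
        rw [mul_pow]; ring

end AuxGen

section MainAux

lemma toBlocks₁₁_mulVec' (M : Matrix (Fin p₀ ⊕ Fin p₁) (Fin p₀ ⊕ Fin p₁) ℝ) (v : Fin p₀ → ℝ) :
    (toBlocks₁₁ M).mulVec v = fun i => M.mulVec (Sum.elim v 0) (Sum.inl i) := by
  funext i
  simp [Matrix.mulVec, dotProduct, Fintype.sum_sum_type, toBlocks₁₁]

lemma toBlocks₂₁_mulVec' (M : Matrix (Fin p₀ ⊕ Fin p₁) (Fin p₀ ⊕ Fin p₁) ℝ) (v : Fin p₀ → ℝ) :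
    (toBlocks₂₁ M).mulVec v = fun j => M.mulVec (Sum.elim v 0) (Sum.inr j) := by
  funext j
  simp [Matrix.mulVec, dotProduct, Fintype.sum_sum_type, toBlocks₂₁]

end MainAux

/-- `g_{v,δ}(t,x,y) − (t,x,y) = (0, 0, δ³ R(δ,v))` where
`R(δ,v) := Σ_{n} ((−1)^n δ^{2n}/(n+1)!) (B^{n+1})₁₀ v` converges absolutely; in
particular the time component and the `x`-component are unchanged. -/
theorem stmt_2 {p₀ p₁ : ℕ} (hp₀ : 1 ≤ p₀) (hp₁ : 1 ≤ p₁)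
    (B : Matrix (Fin p₀ ⊕ Fin p₁) (Fin p₀ ⊕ Fin p₁) ℝ)
    (t : ℝ) (x : Fin p₀ → ℝ) (y : Fin p₁ → ℝ) (v : Fin p₀ → ℝ) (δ : ℝ) :
    (Summable fun n : ℕ => ‖((-1 : ℝ) ^ n * δ ^ (2 * n) / (n + 1).factorial) •
        (toBlocks₂₁ (B ^ (n + 1))).mulVec v‖) ∧
      gC B v δ (t, x, y) =
        (t, x,
          y + δ ^ 3 • ∑' n : ℕ, ((-1 : ℝ) ^ n * δ ^ (2 * n) / (n + 1).factorial) •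
            (toBlocks₂₁ (B ^ (n + 1))).mulVec v) := by
  classical
  set u : Fin p₀ ⊕ Fin p₁ → ℝ := Sum.elim v 0 with hu
  -- restriction norm bounds
  have hrestr₂ : ∀ (P : Fin p₀ ⊕ Fin p₁ → ℝ), ‖fun j : Fin p₁ => P (Sum.inr j)‖ ≤ ‖P‖ := fun P =>
    (pi_norm_le_iff_of_nonneg (norm_nonneg _)).2 fun j => norm_le_pi_norm P (Sum.inr j)
  have hrestr₁ : ∀ (P : Fin p₀ ⊕ Fin p₁ → ℝ), ‖fun i : Fin p₀ => P (Sum.inl i)‖ ≤ ‖P‖ := fun P =>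
    (pi_norm_le_iff_of_nonneg (norm_nonneg _)).2 fun i => norm_le_pi_norm P (Sum.inl i)
  -- summability of the two series in the statement
  obtain ⟨C₁, r₁, hC₁, hr₁, hb₁⟩ := norm_pow_mulVec_le B u 1 one_pos
  obtain ⟨C₂, r₂, hC₂, hr₂, hb₂⟩ := norm_pow_mulVec_le B u 2 two_pos
  have hS : Summable fun n : ℕ => ‖((-1 : ℝ) ^ n * δ ^ (2 * n) / (n + 1).factorial) •
      (toBlocks₂₁ (B ^ (n + 1))).mulVec v‖ := by
    refine summable_norm_smul_of_bound δ C₁ r₁ hC₁ hr₁ 1 _ fun n => ?_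
    rw [toBlocks₂₁_mulVec']
    exact (hrestr₂ _).trans (hb₁ n)
  have hS' : Summable fun n : ℕ => ‖((-1 : ℝ) ^ n * δ ^ (2 * n) / (n + 2).factorial) •
      (toBlocks₁₁ (B ^ (n + 2))).mulVec v‖ := by
    refine summable_norm_smul_of_bound δ C₂ r₂ hC₂ hr₂ 2 _ fun n => ?_
    rw [toBlocks₁₁_mulVec']
    exact (hrestr₁ _).trans (hb₂ n)
  refine ⟨hS, ?_⟩
  -- notation for the series terms
  set G : ℕ → (Fin p₀ → ℝ) := fun k =>
    (((k.factorial : ℝ)⁻¹) * (-(δ ^ 2)) ^ k) • fun i => (B ^ k).mulVec u (Sum.inl i) with hG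
  set F : ℕ → (Fin p₁ → ℝ) := fun k =>
    (((k.factorial : ℝ)⁻¹) * (-(δ ^ 2)) ^ k) • fun j => (B ^ k).mulVec u (Sum.inr j) with hF
  have hGsum : Summable G := summable_mulVec_proj (-(δ ^ 2)) B u Sum.inl
  have hFsum : Summable F := summable_mulVec_proj (-(δ ^ 2)) B u Sum.inr
  have hGsum1 : Summable fun n : ℕ => G (n + 1) := (summable_nat_add_iff 1).2 hGsum
  have hGsum2 : Summable fun n : ℕ => G (n + 2) := (summable_nat_add_iff 2).2 hGsum
  have hFsum1 : Summable fun n : ℕ => F (n + 1) := (summable_nat_add_iff 1).2 hFsum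
  -- unfolded form of gC
  set W : Fin p₀ ⊕ Fin p₁ → ℝ := Sum.elim (x + δ • v) y with hW
  set Eplus : Fin p₀ ⊕ Fin p₁ → ℝ := (mexp (δ ^ 2 • B)).mulVec W with hEplus
  set Efull : Fin p₀ ⊕ Fin p₁ → ℝ := (mexp (-δ ^ 2 • B)).mulVec u with hEfull
  set Z : Fin p₀ ⊕ Fin p₁ → ℝ := (mexp (-δ ^ 2 • B)).mulVec
    (Sum.elim ((fun i => Eplus (Sum.inl i)) + (-δ) • v) (fun j => Eplus (Sum.inr j))) with hZdef
  have hcomp : gC B v δ (t, x, y) =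
      (t + δ ^ 2 + -δ ^ 2,
        ((fun i => Z (Sum.inl i)) + (-δ ^ 3) • (toBlocks₁₁ B).mulVec v) +
          δ ^ 5 • ∑' n : ℕ, ((-1 : ℝ) ^ n * δ ^ (2 * n) / (n + 2).factorial) •
            (toBlocks₁₁ (B ^ (n + 2))).mulVec v,
        fun j => Z (Sum.inr j)) := rfl
  -- the key cancellation
  have helim : Sum.elim ((fun i => Eplus (Sum.inl i)) + (-δ) • v) (fun j => Eplus (Sum.inr j))
      = Eplus - δ • u := by
    funext z
    cases z with
    | inl i => simp [hu]; ring
    | inr j => simp [hu]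
  have hZ : Z = W - δ • Efull := by
    rw [hZdef, helim, Matrix.mulVec_sub, Matrix.mulVec_smul, hEplus,
      mexp_neg_mulVec_cancel (δ ^ 2) B W]
  -- the series expansions of the two components of Efull
  have hEl : (fun i => Efull (Sum.inl i)) = ∑' k : ℕ, G k := by
    rw [hEfull]
    have := mexp_mulVec_proj (-(δ ^ 2)) B u Sum.inl
    rw [show (-(δ ^ 2) • B) = (-δ ^ 2 • B) by ring_nf] at this
    exact this
  have hEr : (fun j => Efull (Sum.inr j)) = ∑' k : ℕ, F k := by
    rw [hEfull]
    have := mexp_mulVec_proj (-(δ ^ 2)) B u Sum.inr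
    rw [show (-(δ ^ 2) • B) = (-δ ^ 2 • B) by ring_nf] at this
    exact this
  -- special values
  have hG0 : G 0 = v := by
    rw [hG]
    funext i
    simp [hu]
  have hG1 : G 1 = (-(δ ^ 2)) • (toBlocks₁₁ B).mulVec v := by
    rw [hG, toBlocks₁₁_mulVec', ← hu]
    funext i
    simp
  have hF0 : F 0 = 0 := by
    rw [hF]
    funext j
    simp [hu]
  rw [hcomp, hZ]
  simp only [Prod.mk.injEq]
  refine ⟨by ring, ?_, ?_⟩
  · -- x component
    have hsplit : (∑' k : ℕ, G k) = G 0 + (G 1 + ∑' n : ℕ, G (n + 2)) := by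
      rw [Summable.tsum_eq_zero_add hGsum, Summable.tsum_eq_zero_add hGsum1]
    have hxW : (fun i => (W - δ • Efull) (Sum.inl i))
        = (x + δ • v) - δ • fun i => Efull (Sum.inl i) := by
      funext i
      simp [hW]
    have hv' : δ ^ 5 • (∑' n : ℕ, ((-1 : ℝ) ^ n * δ ^ (2 * n) / (n + 2).factorial) •
          (toBlocks₁₁ (B ^ (n + 2))).mulVec v) = δ • ∑' n : ℕ, G (n + 2) := by
      rw [← Summable.tsum_const_smul _ (hS'.of_norm), ← Summable.tsum_const_smul _ hGsum2]
      refine tsum_congr fun n => ?_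
      rw [hG, toBlocks₁₁_mulVec', ← hu, smul_smul, smul_smul]
      congr 1
      have hfac : ((n + 2).factorial : ℝ) ≠ 0 := by exact_mod_cast (n + 2).factorial_ne_zero
      field_simp
      ring
    rw [hxW, hEl, hsplit, hG0, hG1, hv']
    module
  · -- y component
    have hyW : (fun j => (W - δ • Efull) (Sum.inr j))
        = y - δ • fun j => Efull (Sum.inr j) := by
      funext j
      simp [hW]
    have hsplit : (∑' k : ℕ, F k) = F 0 + ∑' n : ℕ, F (n + 1) := Summable.tsum_eq_zero_add hFsum
    have hR : δ ^ 3 • (∑' n : ℕ, ((-1 : ℝ) ^ n * δ ^ (2 * n) / (n + 1).factorial) •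
          (toBlocks₂₁ (B ^ (n + 1))).mulVec v) = (-δ) • ∑' n : ℕ, F (n + 1) := by
      rw [← Summable.tsum_const_smul _ (hS.of_norm), ← Summable.tsum_const_smul _ hFsum1]
      refine tsum_congr fun n => ?_
      rw [hF, toBlocks₂₁_mulVec', ← hu, smul_smul, smul_smul]
      congr 1
      have hfac : ((n + 1).factorial : ℝ) ≠ 0 := by exact_mod_cast (n + 1).factorial_ne_zero
      field_simp
      ring
    rw [hyW, hEr, hsplit, hF0, hR]
    module
end
end

section
/- There exist δ̄ > 0 and ε > 0, depending only on B, such that for every η∈ℝ^p with |η| ≤ ε the equation δ³ R(δ,v) = η admits a solution (δ,v) ∈ [0,δ̄] × S^{p−1}, where S^{p−1} is the unit sphere of ℝ^p. -/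
noncomputable section

open Matrix

/-- `R(δ,v) := Σ_{n=0}^∞ ((−1)^n δ^{2n}/(n+1)!) (B^{n+1})₁₀ v`, where `(M)₁₀` is the
bottom-left `p × p` block. -/
def Rfun {p : ℕ} (B : Matrix (Fin p ⊕ Fin p) (Fin p ⊕ Fin p) ℝ) (δ : ℝ)
    (v : Fin p → ℝ) : Fin p → ℝ :=
  ∑' n : ℕ, ((-1 : ℝ) ^ n * δ ^ (2 * n) / (n + 1).factorial) •
    (toBlocks₂₁ (B ^ (n + 1))).mulVec v

/-- Euclidean norm on `ℝ^p`. -/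
def eucEnorm {p : ℕ} (x : Fin p → ℝ) : ℝ := Real.sqrt (∑ i, x i ^ 2)

namespace Stmt4Aux

attribute [local instance] Matrix.linftyOpNormedRing Matrix.linftyOpNormedAlgebra
  Matrix.linftyOpNormedAddCommGroup Matrix.linftyOpNormedSpace

/-! ### Euclidean norm lemmas -/

variable {p : ℕ}

lemma enorm_nonneg (x : Fin p → ℝ) : 0 ≤ eucEnorm x := Real.sqrt_nonneg _

lemma enorm_eq_zero {x : Fin p → ℝ} (h : eucEnorm x = 0) : x = 0 := by
  rw [eucEnorm, Real.sqrt_eq_zero (by positivity)] at h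
  funext i
  have := (Finset.sum_eq_zero_iff_of_nonneg (fun j _ => sq_nonneg (x j))).mp h i (Finset.mem_univ i)
  exact pow_eq_zero_iff (by norm_num) |>.mp this

lemma enorm_smul (c : ℝ) (x : Fin p → ℝ) : eucEnorm (c • x) = |c| * eucEnorm x := by
  rw [eucEnorm, eucEnorm]
  have : ∑ i, (c • x) i ^ 2 = c^2 * ∑ i, x i ^ 2 := by
    rw [Finset.mul_sum]; congr 1; funext i; simp [mul_pow]
  rw [this, Real.sqrt_mul (sq_nonneg c), Real.sqrt_sq_eq_abs]

lemma continuous_enorm : Continuous (eucEnorm (p := p)) :=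
  Real.continuous_sqrt.comp (continuous_finset_sum _ fun i _ => (continuous_apply i).pow 2)

lemma norm_le_enorm (x : Fin p → ℝ) : ‖x‖ ≤ eucEnorm x := by
  rw [pi_norm_le_iff_of_nonneg (enorm_nonneg x)]
  intro i
  rw [Real.norm_eq_abs, ← Real.sqrt_sq_eq_abs, eucEnorm]
  exact Real.sqrt_le_sqrt (Finset.single_le_sum (fun j _ => sq_nonneg (x j)) (Finset.mem_univ i))

lemma enorm_le_norm (x : Fin p → ℝ) : eucEnorm x ≤ Real.sqrt p * ‖x‖ := by
  have h1 : Real.sqrt p * ‖x‖ = Real.sqrt (p * ‖x‖^2) := by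
    rw [Real.sqrt_mul (by positivity), Real.sqrt_sq (norm_nonneg x)]
  rw [eucEnorm, h1]
  apply Real.sqrt_le_sqrt
  calc ∑ i, x i ^ 2 ≤ ∑ _i : Fin p, ‖x‖^2 := by
        apply Finset.sum_le_sum
        intro i _
        have := norm_le_pi_norm x i
        have h0 : |x i| ≤ ‖x‖ := by rwa [Real.norm_eq_abs] at this
        nlinarith [abs_nonneg (x i), neg_abs_le (x i), le_abs_self (x i)]
    _ = p * ‖x‖^2 := by simp [Finset.sum_const, nsmul_eq_mul]

/-! ### The matrix-valued series -/

lemma coef_abs_le (n : ℕ) (δ : ℝ) :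
    ‖(-1:ℝ)^n * δ^(2*n) / (n+1).factorial‖ ≤ (δ^2)^n / n.factorial := by
  rw [Real.norm_eq_abs, abs_div, abs_mul, abs_pow, abs_pow, abs_neg, abs_one, one_pow, one_mul,
    Nat.abs_cast, pow_mul, sq_abs]
  apply div_le_div_of_nonneg_left (by positivity) (by positivity)
  exact_mod_cast Nat.factorial_le (Nat.le_succ n)

variable (B : Matrix (Fin p ⊕ Fin p) (Fin p ⊕ Fin p) ℝ)

lemma summable_aux (δ : ℝ) :
    Summable (fun n : ℕ => ((-1:ℝ)^n * δ^(2*n) / (n+1).factorial) • B^(n+1)) := by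
  apply Summable.of_norm_bounded (g := fun n => ‖B‖ * ((δ^2*‖B‖)^n / n.factorial))
  · exact (Real.summable_pow_div_factorial _).mul_left _
  · intro n
    rw [norm_smul]
    calc ‖(-1:ℝ)^n * δ^(2*n) / (n+1).factorial‖ * ‖B^(n+1)‖
        ≤ ((δ^2)^n / n.factorial) * ‖B‖^(n+1) := by
          apply mul_le_mul (coef_abs_le n δ) (norm_pow_le' B n.succ_pos) (norm_nonneg _)
          positivity
      _ = ‖B‖ * ((δ^2*‖B‖)^n / n.factorial) := by rw [mul_pow]; ring

/-- The series summed in matrix space. -/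
def Sfun (δ : ℝ) : Matrix (Fin p ⊕ Fin p) (Fin p ⊕ Fin p) ℝ :=
  ∑' n : ℕ, ((-1:ℝ)^n * δ^(2*n) / (n+1).factorial) • B^(n+1)

/-- `A ↦ (toBlocks₂₁ A).mulVec v` as a linear map. -/
def Tlin (v : Fin p → ℝ) :
    Matrix (Fin p ⊕ Fin p) (Fin p ⊕ Fin p) ℝ →ₗ[ℝ] (Fin p → ℝ) where
  toFun A := (toBlocks₂₁ A).mulVec v
  map_add' A C := by
    ext i; simp [toBlocks₂₁, mulVec, dotProduct, add_mul, Finset.sum_add_distrib]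
  map_smul' c A := by
    ext i; simp [toBlocks₂₁, mulVec, dotProduct, Finset.mul_sum, mul_assoc]

lemma Rfun_eq (δ : ℝ) (v : Fin p → ℝ) :
    Rfun B δ v = (toBlocks₂₁ (Sfun B δ)).mulVec v := by
  have h := ((Tlin (p := p) v).toContinuousLinearMap).map_tsum (summable_aux B δ)
  rw [Rfun, Sfun]
  have h2 : ∀ n : ℕ,
      ((Tlin (p := p) v).toContinuousLinearMap) (((-1:ℝ)^n * δ^(2*n) / (n+1).factorial) • B^(n+1))
      = ((-1:ℝ)^n * δ^(2*n) / (n+1).factorial) • (toBlocks₂₁ (B^(n+1))).mulVec v := by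
    intro n
    rw [_root_.map_smul]
    rfl
  rw [← tsum_congr h2, ← h]
  rfl

lemma Sfun_zero : Sfun B 0 = B := by
  rw [Sfun, tsum_eq_single 0]
  · norm_num
  · intro n hn
    have : (0:ℝ) ^ (2*n) = 0 := by
      apply zero_pow
      omega
    rw [this]
    norm_num

lemma contS : ContinuousOn (Sfun B) (Set.Icc (-1:ℝ) 1) := by
  apply continuousOn_tsum (u := fun n => ‖B‖ * (‖B‖^n / n.factorial))
  · intro n
    apply ContinuousOn.smul (f := fun x : ℝ => (-1:ℝ)^n * x^(2*n) / (n+1).factorial) (g := fun _ => B ^ (n + 1)) _ continuousOn_const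
    fun_prop
  · exact (Real.summable_pow_div_factorial _).mul_left _
  · intro n δ hδ
    rw [norm_smul]
    have hδ2 : δ^2 ≤ 1 := by
      rcases hδ with ⟨h1, h2⟩
      nlinarith
    calc ‖(-1:ℝ)^n * δ^(2*n) / (n+1).factorial‖ * ‖B^(n+1)‖
        ≤ ((δ^2)^n / n.factorial) * ‖B‖^(n+1) := by
          apply mul_le_mul (coef_abs_le n δ) (norm_pow_le' B n.succ_pos) (norm_nonneg _)
          positivity
      _ ≤ (1^n / n.factorial) * ‖B‖^(n+1) := by
          gcongr
      _ = ‖B‖ * (‖B‖^n / n.factorial) := by rw [one_pow, pow_succ]; ring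

/-- The bottom-left block of the sum. -/
def Mfun (δ : ℝ) : Matrix (Fin p) (Fin p) ℝ := toBlocks₂₁ (Sfun B δ)

lemma contM : ContinuousOn (Mfun B) (Set.Icc (-1:ℝ) 1) := by
  have h : Continuous (fun M : Matrix (Fin p ⊕ Fin p) (Fin p ⊕ Fin p) ℝ =>
      M.submatrix Sum.inr Sum.inl) := continuous_id.matrix_submatrix _ _
  exact h.comp_continuousOn (contS B)

lemma contDet : ContinuousOn (fun δ => (Mfun B δ).det) (Set.Icc (-1:ℝ) 1) :=
  continuous_id.matrix_det.comp_continuousOn (contM B)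

lemma contInv {s : Set ℝ} (hs : s ⊆ Set.Icc (-1:ℝ) 1)
    (hdet : ∀ δ ∈ s, (Mfun B δ).det ≠ 0) :
    ContinuousOn (fun δ => (Mfun B δ)⁻¹) s := by
  have heq : ∀ δ ∈ s, (Mfun B δ)⁻¹ = ((Mfun B δ).det)⁻¹ • (Mfun B δ).adjugate := by
    intro δ hδ
    rw [Matrix.inv_def, Ring.inverse_eq_inv']
  apply ContinuousOn.congr _ heq
  exact (((contDet B).mono hs).inv₀ hdet).smul
    (continuous_id.matrix_adjugate.comp_continuousOn ((contM B).mono hs))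

lemma exists_inv_bound {s : Set ℝ} (hcomp : IsCompact s) (hs : s ⊆ Set.Icc (-1:ℝ) 1)
    (hdet : ∀ δ ∈ s, (Mfun B δ).det ≠ 0) :
    ∃ C : ℝ, 0 ≤ C ∧ ∀ δ ∈ s, ∀ η : Fin p → ℝ,
      eucEnorm (((Mfun B δ)⁻¹).mulVec η) ≤ C * eucEnorm η := by
  obtain ⟨C, hC⟩ := hcomp.exists_bound_of_continuousOn (contInv B hs hdet)
  refine ⟨Real.sqrt p * (|C| + 1), by positivity, ?_⟩
  intro δ hδ η
  calc eucEnorm (((Mfun B δ)⁻¹).mulVec η) ≤ Real.sqrt p * ‖((Mfun B δ)⁻¹).mulVec η‖ :=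
        enorm_le_norm _
    _ ≤ Real.sqrt p * (‖(Mfun B δ)⁻¹‖ * ‖η‖) :=
        mul_le_mul_of_nonneg_left (Matrix.linfty_opNorm_mulVec _ _) (by positivity)
    _ ≤ Real.sqrt p * ((|C| + 1) * eucEnorm η) := by
        apply mul_le_mul_of_nonneg_left _ (by positivity)
        apply mul_le_mul _ (norm_le_enorm η) (norm_nonneg _) (by positivity)
        calc ‖(Mfun B δ)⁻¹‖ ≤ C := hC δ hδ
          _ ≤ |C| := le_abs_self C
          _ ≤ |C| + 1 := by linarith
    _ = Real.sqrt p * (|C| + 1) * eucEnorm η := by ring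

end Stmt4Aux

open Stmt4Aux in
/-- if `B₁₀` is invertible, there exist `δ̄ > 0` and `ε > 0`, depending
only on `B`, such that for every `η` with `|η| ≤ ε` the equation `δ³ R(δ,v) = η` has a
solution `(δ,v) ∈ [0,δ̄] × S^{p−1}`. -/
theorem stmt_4 {p : ℕ} (hp : 1 ≤ p)
    (B : Matrix (Fin p ⊕ Fin p) (Fin p ⊕ Fin p) ℝ)
    (hinv : IsUnit (toBlocks₂₁ B)) :
    ∃ δbar > (0 : ℝ), ∃ ε > (0 : ℝ), ∀ η : Fin p → ℝ, eucEnorm η ≤ ε →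
      ∃ δ : ℝ, δ ∈ Set.Icc (0 : ℝ) δbar ∧ ∃ v : Fin p → ℝ, eucEnorm v = 1 ∧
        δ ^ 3 • Rfun B δ v = η := by
  classical
  -- determinant nonzero at 0
  have hM0 : Mfun B 0 = toBlocks₂₁ B := by rw [Mfun, Sfun_zero]
  have hdet0 : (Mfun B 0).det ≠ 0 := by
    rw [hM0]
    exact ((Matrix.isUnit_iff_isUnit_det _).mp hinv).ne_zero
  -- find δbar with det nonzero on [0, δbar]
  have h0mem : (0:ℝ) ∈ Set.Icc (-1:ℝ) 1 := by constructor <;> norm_num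
  have hcw : ContinuousWithinAt (fun δ => (Mfun B δ).det) (Set.Icc (-1:ℝ) 1) 0 :=
    (contDet B) 0 h0mem
  have hev : ∀ᶠ δ in nhdsWithin 0 (Set.Icc (-1:ℝ) 1), (Mfun B δ).det ≠ 0 :=
    hcw.eventually_ne hdet0
  rw [Filter.eventually_iff, Metric.mem_nhdsWithin_iff] at hev
  obtain ⟨r, hr, hsub⟩ := hev
  set δbar : ℝ := min (r/2) 1 with hδbar_def
  have hδbar_pos : 0 < δbar := lt_min (by positivity) one_pos
  have hδbar_le1 : δbar ≤ 1 := min_le_right _ _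
  have hIccsub : Set.Icc (0:ℝ) δbar ⊆ Set.Icc (-1:ℝ) 1 := by
    intro δ ⟨h1, h2⟩
    exact ⟨by linarith, le_trans h2 hδbar_le1⟩
  have hdetn : ∀ δ ∈ Set.Icc (0:ℝ) δbar, (Mfun B δ).det ≠ 0 := by
    intro δ ⟨h1, h2⟩
    apply hsub
    constructor
    · rw [Metric.mem_ball, Real.dist_eq, sub_zero, abs_of_nonneg h1]
      calc δ ≤ δbar := h2
        _ ≤ r/2 := min_le_left _ _
        _ < r := by linarith
    · exact hIccsub ⟨h1, h2⟩
  -- continuity of the inverse and uniform bound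
  have hcontInv := contInv B hIccsub hdetn
  obtain ⟨K, hK_nonneg, hK⟩ := exists_inv_bound B isCompact_Icc hIccsub hdetn
  set ε : ℝ := δbar^3 / (K + 1) with hε_def
  have hε_pos : 0 < ε := by positivity
  refine ⟨δbar, hδbar_pos, ε, hε_pos, ?_⟩
  intro η hη
  by_cases hη0 : η = 0
  · -- trivial case
    refine ⟨0, ⟨le_refl _, le_of_lt hδbar_pos⟩, (Pi.single (⟨0, hp⟩ : Fin p) (1:ℝ) : Fin p → ℝ), ?_, ?_⟩
    · rw [eucEnorm]
      have : ∑ i, (Pi.single (⟨0, hp⟩ : Fin p) (1:ℝ) : Fin p → ℝ) i ^ 2 = 1 := by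
        rw [Finset.sum_eq_single (⟨0, hp⟩ : Fin p)]
        · simp
        · intro b _ hb
          simp [Pi.single_apply, hb]
        · intro h
          exact absurd (Finset.mem_univ _) h
      rw [this, Real.sqrt_one]
    · rw [hη0]
      norm_num
  · -- main case: intermediate value theorem
    set w : ℝ → (Fin p → ℝ) := fun δ => ((Mfun B δ)⁻¹).mulVec η with hw_def
    have hcontw : ContinuousOn w (Set.Icc (0:ℝ) δbar) := by
      have h2 : Continuous (fun A : Matrix (Fin p) (Fin p) ℝ => A.mulVec η) :=
        continuous_id.matrix_mulVec continuous_const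
      exact h2.comp_continuousOn hcontInv
    set φ : ℝ → ℝ := fun δ => eucEnorm (w δ) - δ^3 with hφ_def
    have hcontφ : ContinuousOn φ (Set.Icc (0:ℝ) δbar) :=
      (Stmt4Aux.continuous_enorm.comp_continuousOn hcontw).sub (continuous_pow 3).continuousOn
    -- recovery identity
    have hrecov : ∀ δ ∈ Set.Icc (0:ℝ) δbar, (Mfun B δ).mulVec (w δ) = η := by
      intro δ hδ
      rw [hw_def]
      rw [Matrix.mulVec_mulVec, Matrix.mul_nonsing_inv _ (isUnit_iff_ne_zero.mpr (hdetn δ hδ)),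
        Matrix.one_mulVec]
    have h0Icc : (0:ℝ) ∈ Set.Icc (0:ℝ) δbar := ⟨le_refl _, le_of_lt hδbar_pos⟩
    have hφ0 : 0 < φ 0 := by
      have hw0 : w 0 ≠ 0 := by
        intro hcon
        apply hη0
        rw [← hrecov 0 h0Icc, hcon, Matrix.mulVec_zero]
      have h1 : eucEnorm (w 0) ≠ 0 := fun h => hw0 (Stmt4Aux.enorm_eq_zero h)
      have h2 : 0 < eucEnorm (w 0) := lt_of_le_of_ne (Stmt4Aux.enorm_nonneg _) (Ne.symm h1)
      simpa [hφ_def] using h2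
    have hφbar : φ δbar ≤ 0 := by
      have hbarIcc : δbar ∈ Set.Icc (0:ℝ) δbar := ⟨le_of_lt hδbar_pos, le_refl _⟩
      have h1 : eucEnorm (w δbar) ≤ K * ε := by
        calc eucEnorm (w δbar) ≤ K * eucEnorm η := hK δbar hbarIcc η
          _ ≤ K * ε := mul_le_mul_of_nonneg_left hη hK_nonneg
      have h2 : K * ε ≤ δbar^3 := by
        rw [hε_def]
        calc K * (δbar^3 / (K+1)) = δbar^3 * (K / (K+1)) := by ring
          _ ≤ δbar^3 * 1 := by
              apply mul_le_mul_of_nonneg_left _ (by positivity)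
              rw [div_le_one (by positivity)]
              linarith
          _ = δbar^3 := mul_one _
      simp only [hφ_def]
      linarith
    -- IVT
    have hIVT := intermediate_value_Icc' (le_of_lt hδbar_pos) hcontφ
    have h0mem' : (0:ℝ) ∈ Set.Icc (φ δbar) (φ 0) := ⟨hφbar, le_of_lt hφ0⟩
    obtain ⟨δ, hδIcc, hφδ⟩ := hIVT h0mem'
    have hwδ : eucEnorm (w δ) = δ^3 := by
      have := hφδ
      simp only [hφ_def] at this
      linarith
    have hδ_ne : δ ≠ 0 := by
      intro hcon
      rw [hcon] at hφδ
      exact absurd hφδ (ne_of_gt hφ0)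
    have hδ_pos : 0 < δ := lt_of_le_of_ne hδIcc.1 (Ne.symm hδ_ne)
    have hδ3_ne : δ^3 ≠ 0 := pow_ne_zero _ hδ_ne
    refine ⟨δ, hδIcc, (δ^3)⁻¹ • w δ, ?_, ?_⟩
    · rw [Stmt4Aux.enorm_smul, hwδ, abs_inv, abs_of_pos (by positivity)]
      field_simp
    · rw [Rfun_eq, ← Mfun, Matrix.mulVec_smul, smul_smul, mul_inv_cancel₀ hδ3_ne, one_smul]
      exact hrecov δ hδIcc
end
end
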